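/- Coupon collector tail bound: Let X_1, X_2, ... be i.i.d. uniform random variables on Fin n (n ≥ 1), and let τ = min { t : {X_1,...,X_t} = Fin n } be the first time all n values have appeared. Then for every c > 0, P(τ > ⌈n·log n + c·n⌉) ≤ e^{-c}. -/

import Mathlib

open MeasureTheory ProbabilityTheory

/-- The coupon collector time: the first `t` such that all values of `Fin n`
appear among the first `t` draws `X 0, …, X (t-1)` (and `⊤` if this never happens). -/
noncomputable def coverTime {n : ℕ} {Ω : Type*} (X : ℕ → Ω → Fin n) (ω : Ω) : ℕ∞ :=
  sInf {t : ℕ∞ | ∃ s : ℕ, (s : ℕ∞) = t ∧ ∀ k : Fin n, ∃ i < s, X i ω = k}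

theorem stmt_4 {Ω : Type*} [MeasurableSpace Ω] (μ : Measure Ω)
    [IsProbabilityMeasure μ] (n : ℕ) (hn : 1 ≤ n)
    (X : ℕ → Ω → Fin n) (hmeas : ∀ i, Measurable (X i))
    (hindep : iIndepFun X μ)
    (hunif : ∀ i, ∀ k : Fin n, μ (X i ⁻¹' {k}) = (n : ENNReal)⁻¹)
    (c : ℝ) (hc : 0 < c) :
    μ {ω | ((⌈(n : ℝ) * Real.log n + c * n⌉₊ : ℕ) : ℕ∞) < coverTime X ω} ≤
      ENNReal.ofReal (Real.exp (-c)) := by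
  set T : ℕ := ⌈(n : ℝ) * Real.log n + c * n⌉₊ with hT
  have hnR : (0:ℝ) < n := by exact_mod_cast hn
  -- inclusion into union of "coupon k missed" events
  have hsub : {ω | ((T : ℕ) : ℕ∞) < coverTime X ω} ⊆
      ⋃ k : Fin n, ⋂ i ∈ Finset.range T, X i ⁻¹' ({k}ᶜ) := by
    intro ω hω
    simp only [Set.mem_setOf_eq] at hω
    have hnot : ¬ ∀ k : Fin n, ∃ i < T, X i ω = k := by
      intro h
      have : ((T : ℕ) : ℕ∞) ∈ {t : ℕ∞ | ∃ s : ℕ, (s : ℕ∞) = t ∧ ∀ k : Fin n, ∃ i < s, X i ω = k} :=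
        ⟨T, rfl, h⟩
      exact absurd (csInf_le (OrderBot.bddBelow _) this) (not_le_of_gt hω)
    push_neg at hnot
    obtain ⟨k, hk⟩ := hnot
    refine Set.mem_iUnion.2 ⟨k, ?_⟩
    simp only [Set.mem_iInter, Finset.mem_range, Set.mem_preimage, Set.mem_compl_iff,
      Set.mem_singleton_iff]
    intro i hi
    exact hk i hi
  -- probability each coupon missed
  have hmiss : ∀ k : Fin n, μ (⋂ i ∈ Finset.range T, X i ⁻¹' ({k}ᶜ)) =
      (1 - (n : ENNReal)⁻¹) ^ T := by
    intro k
    rw [hindep.meas_biInter (S := Finset.range T)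
      (fun i _ => ⟨{k}ᶜ, (measurableSet_singleton k).compl, rfl⟩)]
    have h1 : ∀ i : ℕ, μ (X i ⁻¹' ({k}ᶜ)) = 1 - (n : ENNReal)⁻¹ := by
      intro i
      rw [Set.preimage_compl, measure_compl ((measurableSet_singleton k).preimage (hmeas i))
        (measure_ne_top μ _), hunif i k, measure_univ]
    simp_rw [h1, Finset.prod_const, Finset.card_range]
  have hbound : μ {ω | ((T : ℕ) : ℕ∞) < coverTime X ω} ≤ n * (1 - (n : ENNReal)⁻¹) ^ T := by
    calc μ {ω | ((T : ℕ) : ℕ∞) < coverTime X ω}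
        ≤ μ (⋃ k : Fin n, ⋂ i ∈ Finset.range T, X i ⁻¹' ({k}ᶜ)) := measure_mono hsub
      _ ≤ ∑ k : Fin n, μ (⋂ i ∈ Finset.range T, X i ⁻¹' ({k}ᶜ)) := measure_iUnion_fintype_le _ _
      _ = n * (1 - (n : ENNReal)⁻¹) ^ T := by simp only [hmiss, Finset.sum_const, Finset.card_univ, Fintype.card_fin, nsmul_eq_mul]
  refine hbound.trans ?_
  -- real analysis
  have hinv : (n : ENNReal)⁻¹ ≤ 1 := by
    simp [ENNReal.inv_le_one]
    exact_mod_cast hn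
  have hsubR : (1 : ENNReal) - (n : ENNReal)⁻¹ = ENNReal.ofReal (1 - 1/(n:ℝ)) := by
    rw [ENNReal.ofReal_sub _ (by positivity), ENNReal.ofReal_one]
    congr 1
    rw [one_div, ENNReal.ofReal_inv_of_pos hnR, ENNReal.ofReal_natCast]
  rw [hsubR, ← ENNReal.ofReal_pow (by
      have : (1:ℝ)/(n:ℝ) ≤ 1 := by
        rw [div_le_one hnR]; exact_mod_cast hn
      linarith),
    ← ENNReal.ofReal_natCast, ← ENNReal.ofReal_mul (by positivity)]
  apply ENNReal.ofReal_le_ofReal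
  have h1n : (0:ℝ) ≤ 1 - 1/(n:ℝ) := by
    have : (1:ℝ)/(n:ℝ) ≤ 1 := by rw [div_le_one hnR]; exact_mod_cast hn
    linarith
  have hexp1 : (1 - 1/(n:ℝ)) ≤ Real.exp (-(1/(n:ℝ))) := by
    have := Real.add_one_le_exp (-(1/(n:ℝ)))
    linarith
  calc (n:ℝ) * (1 - 1/(n:ℝ)) ^ T ≤ (n:ℝ) * Real.exp (-(1/(n:ℝ))) ^ T := by
        apply mul_le_mul_of_nonneg_left (pow_le_pow_left₀ h1n hexp1 T) (le_of_lt hnR)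
    _ = Real.exp (Real.log n + (-(1/(n:ℝ))) * T) := by
        rw [Real.exp_add, ← Real.exp_nat_mul, Real.exp_log hnR]; ring_nf
    _ ≤ Real.exp (-c) := by
        apply Real.exp_le_exp.2
        have hceil : (n : ℝ) * Real.log n + c * n ≤ (T : ℝ) := Nat.le_ceil _
        rw [neg_mul, ← sub_eq_add_neg, sub_le_iff_le_add, ← sub_le_iff_le_add',
          div_mul_eq_mul_div, le_div_iff₀ hnR]
        nlinarith [Real.log_nonneg (by exact_mod_cast hn : (1:ℝ) ≤ n)]
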